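/- For each i, the 2×2 matrix over C given by M_i = [[0, z_i^{-4}],[1, 1 − z_{i+1}^{-4}]] acting on coordinates (i, i+1) of C^N (identity elsewhere), where the colors z_1,...,z_N ∈ C^* get permuted by the braid action, defines a representation of the colored braid groupoid: the colored braid relation M_i(a,b)·M_{i+1}(a,c)·M_i(b,c) = M_{i+1}(b,c)·M_i(a,c)·M_{i+1}(a,b) holds for all colors a,b,c ∈ C^*, and M_i and M_j commute for |i−j| ≥ 2. -/

import Mathlib

noncomputable section

open Matrix

/-- The colored Burau matrix `M_i(a,b)`: the identity except in rows/columns `i, i+1`,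
where it is the 2×2 block `[[0, a⁻⁴],[1, 1 − b⁻⁴]]`; here `a, b` are the colors of the
strands `i` and `i+1` before the crossing. -/
def cburau (N : ℕ) (i : ℕ) (a b : ℂ) : Matrix (Fin N) (Fin N) ℂ :=
  Matrix.of fun j k =>
    if (j : ℕ) = i ∧ (k : ℕ) = i then 0
    else if (j : ℕ) = i ∧ (k : ℕ) = i + 1 then (a⁻¹) ^ 4
    else if (j : ℕ) = i + 1 ∧ (k : ℕ) = i then 1
    else if (j : ℕ) = i + 1 ∧ (k : ℕ) = i + 1 then 1 - (b⁻¹) ^ 4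
    else if j = k then 1 else 0

set_option maxHeartbeats 1000000

/-- Decomposition of `cburau` into identity plus single-entry matrices. -/
lemma cburau_eq {N i : ℕ} (h : i + 1 < N) (a b : ℂ) :
    cburau N i a b = 1 + single ⟨i, by omega⟩ ⟨i, by omega⟩ (-1)
      + single ⟨i, by omega⟩ ⟨i+1, h⟩ ((a⁻¹)^4)
      + single ⟨i+1, h⟩ ⟨i, by omega⟩ 1
      + single ⟨i+1, h⟩ ⟨i+1, h⟩ (-((b⁻¹)^4)) := by
  ext j k
  simp only [cburau, of_apply, Matrix.add_apply, Matrix.one_apply, single,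
    Fin.ext_iff, Fin.val_mk]
  split_ifs
  any_goals (exfalso; omega)
  all_goals ring

/-- Abstract form of the colored braid relation. -/
lemma cburau_key {N : ℕ} (p q r : Fin N) (hpq : p ≠ q) (hpr : p ≠ r) (hqr : q ≠ r)
    (a b c : ℂ) :
    (1 + single p p (-1) + single p q ((b⁻¹)^4)
      + single q p 1 + single q q (-((c⁻¹)^4))) *
    (1 + single q q (-1) + single q r ((a⁻¹)^4)
      + single r q 1 + single r r (-((c⁻¹)^4))) *
    (1 + single p p (-1) + single p q ((a⁻¹)^4)
      + single q p 1 + single q q (-((b⁻¹)^4))) =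
    (1 + single q q (-1) + single q r ((a⁻¹)^4)
      + single r q 1 + single r r (-((b⁻¹)^4))) *
    (1 + single p p (-1) + single p q ((a⁻¹)^4)
      + single q p 1 + single q q (-((c⁻¹)^4))) *
    (1 + single q q (-1) + single q r ((b⁻¹)^4)
      + single r q 1 + single r r (-((c⁻¹)^4))) := by
  have hqp := hpq.symm; have hrp := hpr.symm; have hrq := hqr.symm
  simp only [add_mul, mul_add, one_mul, mul_one, Matrix.single_mul_single_same,
    Matrix.single_mul_single_of_ne, hpq, hpr, hqr, hqp, hrp, hrq,
    add_zero, zero_add, mul_zero, zero_mul, ne_eq, not_false_iff]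
  ext j k
  by_cases hjp : p = j <;> by_cases hjq : q = j <;> by_cases hjr : r = j <;>
    by_cases hkp : p = k <;> by_cases hkq : q = k <;> by_cases hkr : r = k <;>
    subst_vars <;>
    first
      | exact absurd rfl hpq | exact absurd rfl hpr | exact absurd rfl hqr
      | exact absurd rfl hqp | exact absurd rfl hrp | exact absurd rfl hrq
      | (simp only [Matrix.add_apply, Matrix.one_apply, Matrix.single,
          Matrix.of_apply, *, and_self, and_true, true_and, and_false, false_and,
          if_true, if_false, not_false_iff, eq_self_iff_true, ne_eq]
         try ring)

/-- Abstract form of the far-commutation relation. -/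
lemma cburau_key2 {N : ℕ} (p q r s : Fin N) (hpr : p ≠ r) (hps : p ≠ s)
    (hqr : q ≠ r) (hqs : q ≠ s) (a b c d : ℂ) :
    (1 + single p p (-1) + single p q ((a⁻¹)^4)
      + single q p 1 + single q q (-((b⁻¹)^4))) *
    (1 + single r r (-1) + single r s ((c⁻¹)^4)
      + single s r 1 + single s s (-((d⁻¹)^4))) =
    (1 + single r r (-1) + single r s ((c⁻¹)^4)
      + single s r 1 + single s s (-((d⁻¹)^4))) *
    (1 + single p p (-1) + single p q ((a⁻¹)^4)
      + single q p 1 + single q q (-((b⁻¹)^4))) := by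
  have hrp := hpr.symm; have hsp := hps.symm; have hrq := hqr.symm; have hsq := hqs.symm
  simp only [add_mul, mul_add, one_mul, mul_one, Matrix.single_mul_single_same,
    Matrix.single_mul_single_of_ne, hpr, hps, hqr, hqs, hrp, hsp, hrq, hsq,
    add_zero, zero_add, mul_zero, zero_mul, ne_eq, not_false_iff]
  abel

/-- Composition of `vecMulLinear`s is `vecMulLinear` of the reversed product. -/
lemma vecMulLinear_comp {N : ℕ} (A B : Matrix (Fin N) (Fin N) ℂ) :
    A.vecMulLinear ∘ₗ B.vecMulLinear = (B * A).vecMulLinear := by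
  apply LinearMap.ext; intro v
  simp [Matrix.vecMulLinear_apply, Matrix.vecMul_vecMul]

/-- The colored Burau matrices define a representation of the colored braid groupoid:
as operators (acting on row vectors, composed in the given order) they satisfy the colored
braid relation `M_i(a,b)·M_{i+1}(a,c)·M_i(b,c) = M_{i+1}(b,c)·M_i(a,c)·M_{i+1}(a,b)`,
and far-apart generators commute. -/
theorem cburau_colored_braid_relations (N : ℕ) :
    (∀ i : ℕ, i + 2 < N → ∀ a b c : ℂ, a ≠ 0 → b ≠ 0 → c ≠ 0 →
      (cburau N i a b).vecMulLinear ∘ₗ (cburau N (i + 1) a c).vecMulLinear ∘ₗ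
          (cburau N i b c).vecMulLinear =
        (cburau N (i + 1) b c).vecMulLinear ∘ₗ (cburau N i a c).vecMulLinear ∘ₗ
          (cburau N (i + 1) a b).vecMulLinear) ∧
    (∀ i j : ℕ, i + 2 ≤ j → j + 1 < N → ∀ a b c d : ℂ, a ≠ 0 → b ≠ 0 → c ≠ 0 → d ≠ 0 →
      (cburau N i a b).vecMulLinear ∘ₗ (cburau N j c d).vecMulLinear =
        (cburau N j c d).vecMulLinear ∘ₗ (cburau N i a b).vecMulLinear) := by
  constructor
  · intro i hi a b c _ _ _
    have h1 : i + 1 < N := by omega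
    have h2 : i + 1 + 1 < N := by omega
    rw [vecMulLinear_comp, vecMulLinear_comp, vecMulLinear_comp, vecMulLinear_comp]
    congr 1
    rw [cburau_eq h1 b c, cburau_eq h2 a c, cburau_eq h1 a b,
      cburau_eq h2 a b, cburau_eq h1 a c, cburau_eq h2 b c]
    exact cburau_key ⟨i, by omega⟩ ⟨i+1, h1⟩ ⟨i+1+1, h2⟩
      (by simp [Fin.ext_iff]) (by simp [Fin.ext_iff]; omega) (by simp [Fin.ext_iff]) a b c
  · intro i j hij hj a b c d _ _ _ _
    have h1 : i + 1 < N := by omega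
    have h2 : j + 1 < N := hj
    rw [vecMulLinear_comp, vecMulLinear_comp]
    congr 1
    rw [cburau_eq h1 a b, cburau_eq h2 c d]
    exact cburau_key2 ⟨j, by omega⟩ ⟨j+1, h2⟩ ⟨i, by omega⟩ ⟨i+1, h1⟩
      (by simp [Fin.ext_iff]; omega) (by simp [Fin.ext_iff]; omega)
      (by simp [Fin.ext_iff]; omega) (by simp [Fin.ext_iff]; omega) c d a b
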